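/- The crescents C(g), as g ranges over Γ ∖ {e}, are pairwise disjoint and their union equals Γ ∖ {e}: every element of Γ other than the identity lies in exactly one crescent. -/

import Mathlib

open MeasureTheory Filter Matrix
open scoped ENNReal ComplexOrder

noncomputable section

namespace Annealed

abbrev FG (r : ℕ) := FreeGroup (Fin r)

def wlen {r : ℕ} (g : FG r) : ℕ := (FreeGroup.toWord g).length

def llex {r : ℕ} (lo : LinearOrder (Fin r × Bool)) (g h : FG r) : Prop :=
  wlen g < wlen h ∨
    (wlen g = wlen h ∧ List.Lex (fun a b => lo.lt a b) (FreeGroup.toWord g) (FreeGroup.toWord h))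

def Qpred {r : ℕ} (lo : LinearOrder (Fin r × Bool)) (g : FG r) : Set (FG r) :=
  {x | llex lo (g * x) g}

def delHead {r : ℕ} (g : FG r) : FG r := FreeGroup.mk (FreeGroup.toWord g).tail

def crescent {r : ℕ} (lo : LinearOrder (Fin r × Bool)) (g : FG r) : Set (FG r) :=
  Qpred lo g \ Qpred lo (delHead g)

/-! ### Auxiliary material -/

open FreeGroup List

variable {r : ℕ}

def NC (u v : Fin r × Bool) : Prop := ¬(u.1 = v.1 ∧ u.2 = !v.2)

def Rd (L : List (Fin r × Bool)) : Prop := List.Chain' NC L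

lemma rd_reduce_eq {L : List (Fin r × Bool)} (h : Rd L) : FreeGroup.reduce L = L := by
  induction L with
  | nil => rfl
  | cons x L ih =>
    have hL : Rd L := h.tail
    rw [FreeGroup.reduce.cons, ih hL]
    cases L with
    | nil => rfl
    | cons hd tl =>
      have : NC x hd := (List.isChain_cons_cons.mp h).1
      simp only [if_neg this]

lemma reduce_rd (L : List (Fin r × Bool)) : Rd (FreeGroup.reduce L) := by
  induction L with
  | nil => exact List.isChain_nil
  | cons x L ih =>
    rw [FreeGroup.reduce.cons]
    cases h : FreeGroup.reduce L with
    | nil => exact List.isChain_singleton x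
    | cons hd tl =>
      rw [h] at ih
      by_cases hc : x.1 = hd.1 ∧ x.2 = !hd.2
      · simpa only [if_pos hc] using (show Rd tl from ih.tail)
      · simp only [if_neg hc]
        exact List.isChain_cons_cons.mpr ⟨hc, ih⟩

lemma rd_toWord (g : FreeGroup (Fin r)) : Rd (FreeGroup.toWord g) := by
  rw [← FreeGroup.reduce_toWord]; exact reduce_rd _

lemma invRev_cons' (s : Fin r × Bool) (L : List (Fin r × Bool)) :
    FreeGroup.invRev (s :: L) = FreeGroup.invRev L ++ [(s.1, !s.2)] := by
  simp [FreeGroup.invRev]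

lemma invRev_concat' (s : Fin r × Bool) (L : List (Fin r × Bool)) :
    FreeGroup.invRev (L ++ [(s.1, !s.2)]) = s :: FreeGroup.invRev L := by
  simp [FreeGroup.invRev]

lemma cancel : ∀ (q p : List (Fin r × Bool)), Rd p → Rd q →
    ∃ a b c, p = a ++ b ∧ q = FreeGroup.invRev b ++ c ∧
      FreeGroup.reduce (p ++ q) = a ++ c ∧ Rd (a ++ c)
  | [], p, hp, _ => ⟨p, [], [], by simp, by simp [FreeGroup.invRev], by
      simp [rd_reduce_eq hp], by simpa using hp⟩
  | y :: q', p, hp, hq => by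
    have hq' : Rd q' := hq.tail
    by_cases hco : p.getLast? = some (y.1, !y.2)
    · have hpne : p ≠ [] := by rintro rfl; simp at hco
      obtain ⟨p₀, rfl⟩ : ∃ p₀, p = p₀ ++ [(y.1, !y.2)] := by
        refine ⟨p.dropLast, ?_⟩
        have := List.dropLast_append_getLast hpne
        rw [List.getLast?_eq_getLast hpne] at hco
        rw [Option.some_inj.mp hco] at this
        exact this.symm
      have hp₀ : Rd p₀ := hp.prefix ⟨[(y.1, !y.2)], rfl⟩
      obtain ⟨a, b, c, h1, h2, h3, h4⟩ := cancel q' p₀ hp₀ hq'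
      refine ⟨a, b ++ [(y.1, !y.2)], c, by rw [h1, List.append_assoc], ?_, ?_, h4⟩
      · rw [invRev_concat', h2]; rfl
      · have hmk : FreeGroup.mk ((y.1, !y.2) :: (y.1, y.2) :: q') = FreeGroup.mk q' :=
          FreeGroup.reduce.exact (FreeGroup.reduce.Step.eq FreeGroup.Red.Step.cons_not_rev)
        have hlist : (p₀ ++ [(y.1, !y.2)]) ++ y :: q'
            = p₀ ++ ((y.1, !y.2) :: (y.1, y.2) :: q') := by simp
        have heq : FreeGroup.mk ((p₀ ++ [(y.1, !y.2)]) ++ y :: q')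
            = FreeGroup.mk (p₀ ++ q') := by
          rw [hlist, ← FreeGroup.mul_mk, ← FreeGroup.mul_mk, hmk]
        have := FreeGroup.reduce.sound heq
        rw [this, h3]
    · refine ⟨p, [], y :: q', by simp, by simp [FreeGroup.invRev], ?_, ?_⟩
      · apply rd_reduce_eq
        refine List.isChain_append.mpr ⟨hp, hq, ?_⟩
        intro u hu v hv
        simp only [List.head?_cons, Option.mem_def, Option.some_inj] at hv
        subst hv
        intro he
        apply hco
        have : u = (y.1, !y.2) := by
          obtain ⟨u1, u2⟩ := u
          simp only at he
          simp [he.1, he.2]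
        rw [← this]
        exact hu
      · refine List.isChain_append.mpr ⟨hp, hq, ?_⟩
        intro u hu v hv
        simp only [List.head?_cons, Option.mem_def, Option.some_inj] at hv
        subst hv
        intro he
        apply hco
        have : u = (y.1, !y.2) := by
          obtain ⟨u1, u2⟩ := u
          simp only at he
          simp [he.1, he.2]
        rw [← this]
        exact hu

lemma decomp (g x : FG r) :
    ∃ a b c, FreeGroup.toWord g = a ++ b ∧
      FreeGroup.toWord x = FreeGroup.invRev b ++ c ∧
      FreeGroup.toWord (g * x) = a ++ c ∧ Rd (a ++ c) := by
  obtain ⟨a, b, c, h1, h2, h3, h4⟩ :=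
    cancel (FreeGroup.toWord x) (FreeGroup.toWord g) (rd_toWord g) (rd_toWord x)
  refine ⟨a, b, c, h1, h2, ?_, h4⟩
  have hgx : g * x = FreeGroup.mk (FreeGroup.toWord g ++ FreeGroup.toWord x) := by
    rw [← FreeGroup.mul_mk, FreeGroup.mk_toWord, FreeGroup.mk_toWord]
  rw [hgx, FreeGroup.toWord_mk, h3]

lemma lex_append_iff (lo : LinearOrder (Fin r × Bool)) (a u v : List (Fin r × Bool)) :
    List.Lex (fun p q => lo.lt p q) (a ++ u) (a ++ v) ↔
      List.Lex (fun p q => lo.lt p q) u v := by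
  haveI : IsIrrefl (Fin r × Bool) (fun p q => lo.lt p q) :=
    ⟨fun p => @lt_irrefl _ lo.toPreorder p⟩
  induction a with
  | nil => rfl
  | cons x a ih =>
    rw [List.cons_append, List.cons_append, List.lex_cons_iff]
    exact ih

lemma mem_Q_iff {lo : LinearOrder (Fin r × Bool)} {g x : FG r} {a b c : List (Fin r × Bool)}
    (hg : FreeGroup.toWord g = a ++ b) (hgx : FreeGroup.toWord (g * x) = a ++ c) :
    x ∈ Qpred lo g ↔ (c.length < b.length ∨
      (c.length = b.length ∧ List.Lex (fun p q => lo.lt p q) c b)) := by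
  show llex lo (g * x) g ↔ _
  unfold llex wlen
  rw [hg, hgx, List.length_append, List.length_append, lex_append_iff]
  constructor
  · rintro (h | ⟨h1, h2⟩)
    · exact Or.inl (by omega)
    · exact Or.inr ⟨by omega, h2⟩
  · rintro (h | ⟨h1, h2⟩)
    · exact Or.inl (by omega)
    · exact Or.inr ⟨by omega, h2⟩

lemma delHead_decomp_cons {g x : FG r} {s : Fin r × Bool} {a' b c : List (Fin r × Bool)}
    (hg : FreeGroup.toWord g = (s :: a') ++ b)
    (hx : FreeGroup.toWord x = FreeGroup.invRev b ++ c)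
    (hrd : Rd ((s :: a') ++ c)) :
    FreeGroup.toWord (delHead g) = a' ++ b ∧
      FreeGroup.toWord (delHead g * x) = a' ++ c := by
  have hrdg : Rd ((s :: a') ++ b) := hg ▸ rd_toWord g
  have hab : Rd (a' ++ b) := by
    rw [List.cons_append] at hrdg; exact hrdg.tail
  have hac : Rd (a' ++ c) := by
    rw [List.cons_append] at hrd; exact hrd.tail
  have h1 : delHead g = FreeGroup.mk (a' ++ b) := by
    unfold delHead; rw [hg]; rfl
  have t1 : FreeGroup.toWord (delHead g) = a' ++ b := by
    rw [h1, FreeGroup.toWord_mk, rd_reduce_eq hab]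
  have h2 : delHead g * x = FreeGroup.mk (a' ++ c) := by
    calc delHead g * x = FreeGroup.mk (a' ++ b) * FreeGroup.mk (FreeGroup.invRev b ++ c) := by
          rw [h1, ← hx, FreeGroup.mk_toWord]
      _ = (FreeGroup.mk a' * FreeGroup.mk b) * ((FreeGroup.mk b)⁻¹ * FreeGroup.mk c) := by
          rw [FreeGroup.inv_mk]; simp [FreeGroup.mul_mk]
      _ = FreeGroup.mk a' * FreeGroup.mk c := by group
      _ = FreeGroup.mk (a' ++ c) := FreeGroup.mul_mk
  exact ⟨t1, by rw [h2, FreeGroup.toWord_mk, rd_reduce_eq hac]⟩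

lemma delHead_decomp_nil {g x : FG r} {s : Fin r × Bool} {b' c : List (Fin r × Bool)}
    (hg : FreeGroup.toWord g = s :: b')
    (hx : FreeGroup.toWord x = FreeGroup.invRev (s :: b') ++ c) :
    FreeGroup.toWord (delHead g) = b' ∧
      FreeGroup.toWord (delHead g * x) = (s.1, !s.2) :: c := by
  have hx' : FreeGroup.toWord x = FreeGroup.invRev b' ++ ((s.1, !s.2) :: c) := by
    rw [hx, invRev_cons', List.append_assoc]; rfl
  have hsc : Rd ((s.1, !s.2) :: c) := by
    have := hx' ▸ rd_toWord x
    exact this.suffix ⟨FreeGroup.invRev b', rfl⟩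
  have hb' : Rd b' := by
    have := hg ▸ rd_toWord g; exact this.tail
  have h1 : delHead g = FreeGroup.mk b' := by unfold delHead; rw [hg]; rfl
  have t1 : FreeGroup.toWord (delHead g) = b' := by
    rw [h1, FreeGroup.toWord_mk, rd_reduce_eq hb']
  have h2 : delHead g * x = FreeGroup.mk ((s.1, !s.2) :: c) := by
    calc delHead g * x
        = FreeGroup.mk b' * FreeGroup.mk (FreeGroup.invRev b' ++ ((s.1, !s.2) :: c)) := by
          rw [h1, ← hx', FreeGroup.mk_toWord]
      _ = FreeGroup.mk b' * ((FreeGroup.mk b')⁻¹ * FreeGroup.mk ((s.1, !s.2) :: c)) := by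
          rw [FreeGroup.inv_mk]; simp [FreeGroup.mul_mk]
      _ = FreeGroup.mk ((s.1, !s.2) :: c) := by group
  exact ⟨t1, by rw [h2, FreeGroup.toWord_mk, rd_reduce_eq hsc]⟩

def cond (lo : LinearOrder (Fin r × Bool)) (x : FG r) (k : ℕ) : Prop :=
  wlen x - k < k ∨ (wlen x - k = k ∧
    List.Lex (fun p q => lo.lt p q) ((FreeGroup.toWord x).drop k)
      (FreeGroup.invRev ((FreeGroup.toWord x).take k)))

lemma cond_mono {lo : LinearOrder (Fin r × Bool)} {x : FG r} {k : ℕ}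
    (h : cond lo x k) : ∀ j, k ≤ j → cond lo x j := by
  intro j hj
  rcases Nat.eq_or_lt_of_le hj with rfl | hlt
  · exact h
  · left
    have : wlen x - k ≤ k := by rcases h with h | ⟨h, _⟩ <;> omega
    omega

lemma crescent_char {lo : LinearOrder (Fin r × Bool)} {g x : FG r} (hg : g ≠ 1)
    (h : x ∈ crescent lo g) :
    1 ≤ wlen g ∧ g = (FreeGroup.mk ((FreeGroup.toWord x).take (wlen g)))⁻¹ ∧
      cond lo x (wlen g) ∧ ¬ cond lo x (wlen g - 1) := by
  obtain ⟨hQ, hnQ⟩ := h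
  obtain ⟨a, b, c, h1, h2, h3, h4⟩ := decomp g x
  have ha : a = [] := by
    by_contra hne
    obtain ⟨s, a', rfl⟩ := List.exists_cons_of_ne_nil hne
    obtain ⟨t1, t2⟩ := delHead_decomp_cons h1 h2 h4
    exact hnQ ((mem_Q_iff t1 t2).mpr ((mem_Q_iff h1 h3).mp hQ))
  subst ha
  simp only [List.nil_append] at h1 h2 h3 h4
  have hbne : b ≠ [] := by
    intro hb
    exact hg (by rw [← FreeGroup.mk_toWord (x := g), h1, hb, ← FreeGroup.one_eq_mk])
  obtain ⟨s, b', rfl⟩ := List.exists_cons_of_ne_nil hbne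
  have hlen : (FreeGroup.toWord g).length = b'.length + 1 := by rw [h1]; simp
  have hm : (FreeGroup.toWord x).length = b'.length + 1 + c.length := by
    rw [h2]; simp [FreeGroup.invRev_length]
  have htake : (FreeGroup.toWord x).take ((FreeGroup.toWord g).length)
      = FreeGroup.invRev (s :: b') := by
    rw [h2]; exact List.take_left' (by simp [FreeGroup.invRev_length, hlen])
  have hdrop : (FreeGroup.toWord x).drop ((FreeGroup.toWord g).length) = c := by
    rw [h2]; exact List.drop_left' (by simp [FreeGroup.invRev_length, hlen])
  have hx' : FreeGroup.toWord x = FreeGroup.invRev b' ++ ((s.1, !s.2) :: c) := by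
    rw [h2, invRev_cons', List.append_assoc]; rfl
  have htake' : (FreeGroup.toWord x).take ((FreeGroup.toWord g).length - 1)
      = FreeGroup.invRev b' := by
    rw [hx']; exact List.take_left' (by simp [FreeGroup.invRev_length, hlen])
  have hdrop' : (FreeGroup.toWord x).drop ((FreeGroup.toWord g).length - 1)
      = (s.1, !s.2) :: c := by
    rw [hx']; exact List.drop_left' (by simp [FreeGroup.invRev_length, hlen])
  refine ⟨by unfold wlen; omega, ?_, ?_, ?_⟩
  · show g = (FreeGroup.mk ((FreeGroup.toWord x).take ((FreeGroup.toWord g).length)))⁻¹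
    rw [htake, ← FreeGroup.inv_mk, inv_inv, ← h1, FreeGroup.mk_toWord]
  · have hQc := (mem_Q_iff (a := []) (by simpa using h1) (by simpa using h3)).mp hQ
    unfold cond wlen
    rw [hdrop, htake, FreeGroup.invRev_invRev]
    simp only [List.length_cons] at hQc
    rcases hQc with hlt | ⟨heq, hlex⟩
    · left; omega
    · right; exact ⟨by omega, hlex⟩
  · obtain ⟨t1, t2⟩ := delHead_decomp_nil h1 h2
    intro hc
    apply hnQ
    refine (mem_Q_iff (a := []) (by simpa using t1) (by simpa using t2)).mpr ?_
    unfold cond wlen at hc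
    rw [hdrop', htake', FreeGroup.invRev_invRev] at hc
    simp only [List.length_cons]
    rcases hc with hlt | ⟨heq, hlex⟩
    · left; omega
    · right; exact ⟨by omega, hlex⟩

lemma not_mem_Q_one {lo : LinearOrder (Fin r × Bool)} {x : FG r} :
    x ∉ Qpred lo (1 : FG r) := by
  intro h
  have h' : llex lo (1 * x) 1 := h
  rw [one_mul] at h'
  rcases h' with h' | ⟨_, h'⟩
  · simp [wlen, FreeGroup.toWord_one] at h'
  · rw [FreeGroup.toWord_one] at h'
    exact List.not_lex_nil h'

lemma wlen_delHead_lt {g : FG r} (hg : g ≠ 1) : wlen (delHead g) < wlen g := by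
  have hne : FreeGroup.toWord g ≠ [] := fun hh => hg (FreeGroup.toWord_eq_nil_iff.mp hh)
  have ht : FreeGroup.toWord (delHead g) = (FreeGroup.toWord g).tail := by
    unfold delHead
    rw [FreeGroup.toWord_mk, rd_reduce_eq ((rd_toWord g).tail)]
  unfold wlen
  rw [ht, List.length_tail]
  have : 0 < (FreeGroup.toWord g).length := List.length_pos_iff.mpr hne
  omega

lemma exists_mem_crescent {lo : LinearOrder (Fin r × Bool)} {x : FG r} :
    ∀ (N : ℕ) (g : FG r), wlen g ≤ N → x ∈ Qpred lo g →
      ∃ h : FG r, h ≠ 1 ∧ x ∈ crescent lo h := by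
  intro N
  induction N with
  | zero =>
    intro g hN hQ
    exfalso
    have hgnil : FreeGroup.toWord g = [] := List.length_eq_zero_iff.mp (Nat.le_zero.mp hN)
    have : g = 1 := FreeGroup.toWord_eq_nil_iff.mp hgnil
    exact not_mem_Q_one (this ▸ hQ)
  | succ N ih =>
    intro g hN hQ
    have hg : g ≠ 1 := by rintro rfl; exact not_mem_Q_one hQ
    by_cases hd : x ∈ Qpred lo (delHead g)
    · exact ih (delHead g) (by have := wlen_delHead_lt hg; omega) hd
    · exact ⟨g, hg, hQ, hd⟩

theorem statement14 (r : ℕ) (hr : 1 ≤ r) (lo : LinearOrder (Fin r × Bool)) :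
    (∀ g : FG r, g ≠ 1 → (1 : FG r) ∉ crescent lo g) ∧
      ∀ x : FG r, x ≠ 1 → ∃! g : FG r, g ≠ 1 ∧ x ∈ crescent lo g := by
  constructor
  · intro g _ h
    have h1 : llex lo (g * 1) g := h.1
    rw [mul_one] at h1
    rcases h1 with h1 | ⟨_, h1⟩
    · omega
    · have hiff := lex_append_iff lo (FreeGroup.toWord g) [] []
      simp only [List.append_nil] at hiff
      exact List.not_lex_nil (hiff.mp h1)
  · intro x hx
    have hxnil : FreeGroup.toWord x ≠ [] := fun hh => hx (FreeGroup.toWord_eq_nil_iff.mp hh)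
    have hxpos : 0 < wlen x := List.length_pos_iff.mpr hxnil
    have hQinv : x ∈ Qpred lo x⁻¹ := by
      show llex lo (x⁻¹ * x) x⁻¹
      rw [inv_mul_cancel]
      left
      have : wlen x⁻¹ = wlen x := by
        unfold wlen; rw [FreeGroup.toWord_inv, FreeGroup.invRev_length]
      unfold wlen at this ⊢
      rw [FreeGroup.toWord_one]
      simpa [this, wlen] using hxpos
    obtain ⟨g, hgne, hgmem⟩ := exists_mem_crescent (wlen x⁻¹) x⁻¹ le_rfl hQinv
    refine ⟨g, ⟨hgne, hgmem⟩, ?_⟩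
    intro y ⟨hyne, hymem⟩
    obtain ⟨hn1, heq1, hc1, hnc1⟩ := crescent_char hyne hymem
    obtain ⟨hn2, heq2, hc2, hnc2⟩ := crescent_char hgne hgmem
    have hnn : wlen y = wlen g := by
      by_contra hne
      rcases Nat.lt_or_ge (wlen y) (wlen g) with hlt | hge
      · exact hnc2 (cond_mono hc1 (wlen g - 1) (by omega))
      · exact hnc1 (cond_mono hc2 (wlen y - 1) (by omega))
    rw [heq1, heq2, hnn]

end Annealed
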